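/- Let R be a commutative ring, let M be an R-module, let A be an m × n matrix with entries in R, and let b ∈ M^m. If the system Ax = b has no constant solution (i.e. there is no y ∈ M with A applied to (y, y, …, y) equal to b), then there exists a finite colouring of M such that no vector x ∈ M^n with all entries of the same colour satisfies Ax = b. -/

import Mathlib

section Aux

open AddCircle

-- representative in [0,1) of an element of ℚ/ℤ
noncomputable def repQ (v : AddCircle (1:ℚ)) : ℚ :=
  haveI : Fact ((0:ℚ) < 1) := ⟨one_pos⟩
  (AddCircle.equivIco 1 0 v : ℚ)

lemma repQ_mem (v : AddCircle (1:ℚ)) : repQ v ∈ Set.Ico (0:ℚ) 1 := by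
  haveI : Fact ((0:ℚ) < 1) := ⟨one_pos⟩
  have h := (AddCircle.equivIco 1 0 v).2
  have h' : repQ v ∈ Set.Ico (0:ℚ) (0 + 1) := h
  rwa [zero_add] at h'

lemma repQ_eq_zero {v : AddCircle (1:ℚ)} (hv : repQ v = 0) : v = 0 := by
  haveI : Fact ((0:ℚ) < 1) := ⟨one_pos⟩
  have := (AddCircle.equivIco 1 0).symm_apply_apply v
  rw [← this]
  show ((repQ v : ℚ) : AddCircle (1:ℚ)) = 0
  rw [hv]
  simp

lemma repQ_spec (v : AddCircle (1:ℚ)) : ((repQ v : ℚ) : AddCircle (1:ℚ)) = v := by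
  haveI : Fact ((0:ℚ) < 1) := ⟨one_pos⟩
  exact (AddCircle.equivIco 1 0).symm_apply_apply v

-- a positive rational < 1 is at distance ≥ 1/den from any integer
lemma rat_dist_int (g : ℚ) (h0 : 0 < g) (h1 : g < 1) (k : ℤ) :
    1 / (g.den : ℚ) ≤ |g - k| := by
  have hden : (0:ℚ) < (g.den : ℚ) := by exact_mod_cast g.pos
  rw [le_abs]
  rcases le_or_gt k 0 with hk | hk
  · left
    rw [div_le_iff₀ hden]
    have h1' : (1:ℚ) ≤ g.num := by exact_mod_cast Rat.num_pos.mpr h0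
    have : (g - k) * g.den = g.num - k * g.den := by
      push_cast [Rat.mul_den_eq_num]
      ring_nf
      rw [Rat.mul_den_eq_num]
      push_cast
      ring
    rw [this]
    have : (0:ℚ) ≤ -k * g.den := by
      apply mul_nonneg _ hden.le
      simpa using (neg_nonneg.mpr (by exact_mod_cast hk : (k:ℚ) ≤ 0))
    nlinarith
  · right
    rw [div_le_iff₀ hden]
    have hnum_lt : (g.num : ℚ) < g.den := by
      have := Rat.mul_den_eq_num g
      nlinarith [Rat.mul_den_eq_num g]
    have hint : (g.num : ℚ) + 1 ≤ g.den := by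
      have : g.num + 1 ≤ (g.den : ℤ) := by exact_mod_cast hnum_lt
      exact_mod_cast this
    have hk1 : (1:ℚ) ≤ k := by exact_mod_cast hk
    have : -(g - (k:ℚ)) * g.den = k * g.den - g.num := by
      rw [neg_sub, sub_mul, Rat.mul_den_eq_num]
    rw [this]
    nlinarith
end Aux

set_option maxHeartbeats 2000000

/-- If the system `Ax = b` (with `A` an `m × n` matrix over a commutative ring `R`, acting
on an `R`-module `M`, and `b ∈ M^m`) has no constant solution, then there is a finite
colouring of `M` with no monochromatic solution. -/
theorem exists_bad_colouring_module {R : Type*} [CommRing R] {M : Type*} [AddCommGroup M]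
    [Module R M] {m n : ℕ} (A : Matrix (Fin m) (Fin n) R) (b : Fin m → M)
    (h : ¬ ∃ y : M, (fun i => ∑ j : Fin n, A i j • y) = b) :
    ∃ (κ : Type) (_ : Finite κ) (c : M → κ),
      ¬ ∃ x : Fin n → M, (∀ i j : Fin n, c (x i) = c (x j)) ∧
        (fun i => ∑ j : Fin n, A i j • x j) = b := by
  classical
  haveI : Fact ((0:ℚ) < 1) := ⟨one_pos⟩
  rcases Nat.eq_zero_or_pos n with hn | hn
  · subst hn
    refine ⟨Unit, inferInstance, fun _ => (), ?_⟩
    rintro ⟨x, -, hx⟩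
    refine h ⟨0, ?_⟩
    rw [← hx]
    funext i
    simp
  -- the constant-solution map
  set ψ : M →+ (Fin m → M) := AddMonoidHom.mk' (fun y => fun i => ∑ j : Fin n, A i j • y)
    (by intro y z; funext i; simp [smul_add, Finset.sum_add_distrib]) with hψ
  set π := QuotientAddGroup.mk' ψ.range with hπ
  have hb : π b ≠ 0 := by
    intro hb0
    rw [hπ, QuotientAddGroup.mk'_apply, QuotientAddGroup.eq_zero_iff] at hb0
    obtain ⟨y, hy⟩ := hb0
    exact h ⟨y, hy⟩
  obtain ⟨χ, hχ⟩ := CharacterModule.exists_character_apply_ne_zero_of_ne_zero hb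
  -- the column maps into ℚ/ℤ
  set u : Fin n → M →+ AddCircle (1:ℚ) := fun j =>
    AddMonoidHom.mk' (fun z => χ (π (fun i => A i j • z)))
      (by
        intro y z
        show χ (π (fun i => A i j • (y + z)))
          = χ (π (fun i => A i j • y)) + χ (π (fun i => A i j • z))
        have harg : (fun i => A i j • (y + z))
            = (fun i => A i j • y) + (fun i => A i j • z) := by
          funext i
          simp [smul_add, Pi.add_apply]
        rw [harg, map_add, map_add]) with hu
  have hsum : ∀ v : Fin n → M,
      ∑ j : Fin n, u j (v j) = χ (π (fun i => ∑ j : Fin n, A i j • v j)) := by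
    intro v
    have h1 : (fun i => ∑ j : Fin n, A i j • v j)
        = ∑ j : Fin n, (fun i => A i j • v j) := by
      funext i
      simp [Finset.sum_apply]
    rw [h1, map_sum π (fun j => (fun i => A i j • v j)) Finset.univ,
      map_sum χ (fun j => π (fun i => A i j • v j)) Finset.univ]
    rfl
  have huzero : ∀ z : M, ∑ j : Fin n, u j z = 0 := by
    intro z
    rw [hsum (fun _ => z)]
    have : π (fun i => ∑ j : Fin n, A i j • z) = 0 := by
      rw [hπ, QuotientAddGroup.mk'_apply, QuotientAddGroup.eq_zero_iff]
      exact ⟨z, rfl⟩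
    rw [this, map_zero]
  -- the target value
  set γ : AddCircle (1:ℚ) := χ (π b) with hγdef
  set g : ℚ := repQ γ with hgdef
  have hg0 : 0 < g := (repQ_mem γ).1.lt_of_ne (fun h' => hχ (repQ_eq_zero h'.symm))
  have hg1 : g < 1 := (repQ_mem γ).2
  -- the colouring
  set N : ℕ := 2 * n * g.den with hN
  have hNpos : 0 < (N:ℚ) := by
    have := g.pos
    positivity
  set f : AddCircle (1:ℚ) → ℤ := fun v => ⌊repQ v * N⌋ with hf
  have hf_nonneg : ∀ v, 0 ≤ f v := fun v =>
    Int.floor_nonneg.mpr (mul_nonneg (repQ_mem v).1 hNpos.le)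
  have hf_lt : ∀ v, (f v).toNat < N := by
    intro v
    have h2 : f v < (N:ℤ) := Int.floor_lt.mpr (by
      push_cast
      nlinarith [(repQ_mem v).2, (repQ_mem v).1, hNpos])
    have h3 := hf_nonneg v
    zify
    rwa [Int.toNat_of_nonneg h3]
  refine ⟨Fin n → Fin N, inferInstance, fun z j => ⟨(f (u j z)).toNat, hf_lt _⟩, ?_⟩
  rintro ⟨x, hmono, hx⟩
  set i0 : Fin n := ⟨0, hn⟩
  -- same colour gives close representatives
  have key : ∀ j : Fin n, ∃ δ : ℚ, |δ| < 1 / N ∧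
      u j (x j) = u j (x i0) + (δ : AddCircle (1:ℚ)) := by
    intro j
    have hcol : f (u j (x j)) = f (u j (x i0)) := by
      have := congrFun (hmono j i0) j
      have h2 : (f (u j (x j))).toNat = (f (u j (x i0))).toNat := by
        simpa using congrArg Fin.val this
      have h3 := hf_nonneg (u j (x j))
      have h4 := hf_nonneg (u j (x i0))
      omega
    refine ⟨repQ (u j (x j)) - repQ (u j (x i0)), ?_, ?_⟩
    · have habs : |repQ (u j (x j)) * N - repQ (u j (x i0)) * N| < 1 :=
        Int.abs_sub_lt_one_of_floor_eq_floor hcol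
      rw [lt_div_iff₀ hNpos]
      calc |repQ (u j (x j)) - repQ (u j (x i0))| * N
          = |(repQ (u j (x j)) - repQ (u j (x i0))) * N| := by
            rw [abs_mul, abs_of_nonneg hNpos.le]
        _ = |repQ (u j (x j)) * N - repQ (u j (x i0)) * N| := by rw [sub_mul]
        _ < 1 := habs
    · push_cast
      rw [QuotientAddGroup.mk_sub]
      rw [repQ_spec, repQ_spec]
      abel
  choose δ hδ hδeq using key
  have hsum2 : ∑ j : Fin n, u j (x j) = γ := by
    rw [hsum x, hγdef]
    congr 1
    rw [hx]
  have hD : ((∑ j : Fin n, δ j : ℚ) : AddCircle (1:ℚ)) = γ := by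
    have : ∑ j : Fin n, u j (x j)
        = ∑ j : Fin n, u j (x i0) + ((∑ j : Fin n, δ j : ℚ) : AddCircle (1:ℚ)) := by
      rw [Finset.sum_congr rfl (fun j _ => hδeq j), Finset.sum_add_distrib]
      congr 1
      rw [QuotientAddGroup.mk_sum]
    rw [hsum2, huzero, zero_add] at this
    exact this.symm
  set D : ℚ := ∑ j : Fin n, δ j with hDdef
  have hDabs : |D| < 1 / (2 * g.den : ℚ) := by
    calc |D| ≤ ∑ j : Fin n, |δ j| := Finset.abs_sum_le_sum_abs _ _
    _ < ∑ j : Fin n, (1 / N : ℚ) := by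
        apply Finset.sum_lt_sum_of_nonempty
        · exact ⟨i0, Finset.mem_univ _⟩
        · intro j _; exact hδ j
    _ = n * (1 / N) := by simp [mul_comm]
    _ = 1 / (2 * g.den : ℚ) := by
        rw [hN]
        have hn' : (n:ℚ) ≠ 0 := by exact_mod_cast hn.ne'
        have : ((2 * n * g.den : ℕ) : ℚ) = 2 * n * g.den := by push_cast; ring
        rw [this]
        field_simp
  -- D and g differ by an integer
  have hmkeq : ((D : ℚ) : AddCircle (1:ℚ)) = ((g : ℚ) : AddCircle (1:ℚ)) := by
    rw [hD, hgdef, repQ_spec]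
  obtain ⟨k, hk⟩ : ∃ k : ℤ, (k:ℚ) = D - g := by
    obtain ⟨k, hk⟩ := QuotientAddGroup.eq_iff_sub_mem.mp hmkeq
    simp only [zsmul_eq_mul, mul_one] at hk
    exact ⟨k, hk⟩
  have hdist := rat_dist_int g hg0 hg1 (-k)
  have hden2 : (0:ℚ) < (g.den : ℚ) := by exact_mod_cast g.pos
  have habs2 : |g - (-k : ℤ)| = |D| := by
    congr 1
    push_cast
    linarith
  rw [habs2] at hdist
  have : 1 / (2 * (g.den:ℚ)) < 1 / (g.den:ℚ) := by
    rw [div_lt_div_iff₀ (by positivity) hden2]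
    nlinarith
  linarith
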